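/- A bounded operator T : X → Y between Banach spaces is infinitely singular (no finite-codimensional subspace X₀ ⊆ X exists on which T restricts to an isomorphism onto its image) if and only if for every ε > 0 there exists an infinite-dimensional closed subspace X_ε ⊆ X with ‖T restricted to X_ε‖ ≤ ε. -/

import Mathlib

open Submodule

section Aux

variable {X Y : Type} [NormedAddCommGroup X] [NormedSpace ℝ X]
  [NormedAddCommGroup Y] [NormedSpace ℝ Y]

/-- Norming finite set of functionals for the span of a finite set. -/
lemma exists_norming (s : Set X) (hs : s.Finite) :
    ∃ F : Finset (X →L[ℝ] ℝ), (∀ f ∈ F, ‖f‖ ≤ 1) ∧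
      ∀ u ∈ Submodule.span ℝ s, ∃ f ∈ F, ‖u‖ ≤ 2 * f u := by
  classical
  set E : Submodule ℝ X := Submodule.span ℝ s with hE
  haveI : FiniteDimensional ℝ E := FiniteDimensional.span_of_finite ℝ hs
  set K : Set X := Subtype.val '' (Metric.sphere (0 : E) 1) with hK
  have hKc : IsCompact K := (isCompact_sphere (0 : E) 1).image continuous_subtype_val
  have hcover : K ⊆ ⋃ u ∈ K, Metric.ball u (1/4) := fun u hu => by
    exact Set.mem_biUnion hu (Metric.mem_ball_self (by norm_num))
  obtain ⟨t, hts, htfin, htcov⟩ :=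
    hKc.elim_finite_subcover_image (fun u _ => Metric.isOpen_ball) hcover
  set g : X → (X →L[ℝ] ℝ) := fun u =>
    if h : u ≠ 0 then Classical.choose (exists_dual_vector ℝ u (norm_ne_zero_iff.2 h)) else 0 with hg
  have hgspec : ∀ u : X, u ≠ 0 → ‖g u‖ = 1 ∧ g u u = ‖u‖ := by
    intro u hu
    simp only [hg, dif_pos hu]
    exact Classical.choose_spec (exists_dual_vector ℝ u (norm_ne_zero_iff.2 hu))
  refine ⟨insert 0 (htfin.toFinset.image g), ?_, ?_⟩
  · intro f hf
    rcases Finset.mem_insert.1 hf with rfl | hf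
    · simp
    · obtain ⟨u, hu, rfl⟩ := Finset.mem_image.1 hf
      by_cases h : u = 0
      · simp [hg, h]
      · exact le_of_eq (hgspec u h).1
  · intro u hu
    by_cases h0 : u = 0
    · exact ⟨0, Finset.mem_insert_self _ _, by simp [h0]⟩
    · have hnorm : 0 < ‖u‖ := norm_pos_iff.2 h0
      set w : X := ‖u‖⁻¹ • u with hw
      have hwE : w ∈ E := E.smul_mem _ hu
      have hwn : ‖w‖ = 1 := by
        rw [hw, norm_smul, norm_inv, norm_norm, inv_mul_cancel₀ hnorm.ne']
      have hwK : w ∈ K := ⟨⟨w, hwE⟩, by simp [Submodule.norm_coe, hwn], rfl⟩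
      obtain ⟨v, hvt, hvb⟩ := Set.mem_iUnion₂.1 (htcov hwK)
      have hvK : v ∈ K := hts hvt
      have hvn : ‖v‖ = 1 := by
        obtain ⟨z, hz, rfl⟩ := hvK
        simpa using hz
      have hv0 : v ≠ 0 := by
        intro h; rw [h] at hvn; simp at hvn
      obtain ⟨hgn, hgv⟩ := hgspec v hv0
      refine ⟨g v, Finset.mem_insert_of_mem (Finset.mem_image.2 ⟨v, htfin.mem_toFinset.2 hvt, rfl⟩), ?_⟩
      have hdist : ‖w - v‖ < 1/4 := by
        rw [← dist_eq_norm]; exact Metric.mem_ball.1 hvb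
      have h1 : g v w ≥ 1/2 := by
        have : g v w = g v v + g v (w - v) := by
          rw [← map_add]; congr 1; abel
        rw [this, hgv, hvn]
        have : |g v (w - v)| ≤ ‖w - v‖ := by
          calc |g v (w - v)| ≤ ‖g v‖ * ‖w - v‖ := (g v).le_opNorm _
          _ ≤ ‖w - v‖ := by rw [hgn]; ring_nf; exact le_refl _
        nlinarith [abs_le.1 this]
      have : u = ‖u‖ • w := by
        rw [hw, smul_smul, mul_inv_cancel₀ hnorm.ne', one_smul]
      rw [this, map_smul]
      simp only [smul_eq_mul, norm_smul, norm_norm, hwn, mul_one]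
      nlinarith


lemma exists_small_vector (T : X →L[ℝ] Y)
    (H : ∀ X₀ : Submodule ℝ X, IsClosed (X₀ : Set X) → FiniteDimensional ℝ (X ⧸ X₀) →
      ∀ c > (0:ℝ), ∃ x ∈ X₀, ‖T x‖ < c * ‖x‖)
    (G : Finset (X →L[ℝ] ℝ)) {c : ℝ} (hc : 0 < c) :
    ∃ x : X, ‖x‖ = 1 ∧ ‖T x‖ < c ∧ ∀ f ∈ G, f x = 0 := by
  classical
  set Φ : X →L[ℝ] (↥G → ℝ) := ContinuousLinearMap.pi (fun f : ↥G => (f : X →L[ℝ] ℝ)) with hΦ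
  set W : Submodule ℝ X := LinearMap.ker (Φ : X →ₗ[ℝ] (↥G → ℝ)) with hW
  have hWmem : ∀ x : X, x ∈ W ↔ ∀ f ∈ G, f x = 0 := by
    intro x
    constructor
    · intro hx f hf
      have := congrFun (LinearMap.mem_ker.1 hx) ⟨f, hf⟩
      simpa [hΦ] using this
    · intro hx
      refine LinearMap.mem_ker.2 (funext fun f => ?_)
      simpa [hΦ] using hx f f.2
  have hWclosed : IsClosed (W : Set X) := ContinuousLinearMap.isClosed_ker Φ
  have hWfd : FiniteDimensional ℝ (X ⧸ W) := by
    exact Module.Finite.equiv ((Φ : X →ₗ[ℝ] (↥G → ℝ)).quotKerEquivRange).symm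
  obtain ⟨x, hxW, hxT⟩ := H W hWclosed hWfd c hc
  have hx0 : x ≠ 0 := by
    intro h; rw [h] at hxT; simp at hxT
  have hnorm : 0 < ‖x‖ := norm_pos_iff.2 hx0
  refine ⟨‖x‖⁻¹ • x, ?_, ?_, ?_⟩
  · rw [norm_smul, norm_inv, norm_norm, inv_mul_cancel₀ hnorm.ne']
  · rw [map_smul, norm_smul, norm_inv, norm_norm]
    rw [inv_mul_lt_iff₀ hnorm]
    linarith [hxT]
  · intro f hf
    rw [map_smul]
    have := (hWmem x).1 hxW f hf
    simp [this]

/-- One step of the Mazur-type construction. -/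
lemma exists_good (T : X →L[ℝ] Y) (ε : ℝ) (hε : 0 < ε)
    (H : ∀ X₀ : Submodule ℝ X, IsClosed (X₀ : Set X) → FiniteDimensional ℝ (X ⧸ X₀) →
      ∀ c > (0:ℝ), ∃ x ∈ X₀, ‖T x‖ < c * ‖x‖)
    (n : ℕ) (prev : ∀ m, m < n → X × Finset (X →L[ℝ] ℝ)) :
    ∃ p : X × Finset (X →L[ℝ] ℝ),
      ‖p.1‖ = 1 ∧ ‖T p.1‖ < ε / 2 ^ (n + 4) ∧
      (∀ m (h : m < n), ∀ f ∈ (prev m h).2, f p.1 = 0) ∧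
      (∀ f ∈ p.2, ‖f‖ ≤ 1) ∧
      (∀ u ∈ Submodule.span ℝ
          (insert p.1 (Set.range fun m : Fin n => (prev m m.2).1)),
        ∃ f ∈ p.2, ‖u‖ ≤ 2 * f u) := by
  classical
  set G : Finset (X →L[ℝ] ℝ) := Finset.univ.biUnion (fun m : Fin n => (prev m m.2).2) with hG
  have hcpos : 0 < ε / 2 ^ (n + 4) := by positivity
  obtain ⟨x, hx1, hxT, hxker⟩ := exists_small_vector T H G hcpos
  obtain ⟨F, hF1, hFn⟩ := exists_norming
    (insert x (Set.range fun m : Fin n => (prev m m.2).1))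
    ((Set.finite_range _).insert x)
  refine ⟨(x, F), hx1, hxT, ?_, hF1, hFn⟩
  intro m h f hf
  exact hxker f (Finset.mem_biUnion.2 ⟨⟨m, h⟩, Finset.mem_univ _, hf⟩)

noncomputable def seq (T : X →L[ℝ] Y) (ε : ℝ) (hε : 0 < ε)
    (H : ∀ X₀ : Submodule ℝ X, IsClosed (X₀ : Set X) → FiniteDimensional ℝ (X ⧸ X₀) →
      ∀ c > (0:ℝ), ∃ x ∈ X₀, ‖T x‖ < c * ‖x‖) (n : ℕ) : X × Finset (X →L[ℝ] ℝ) :=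
  Classical.choose (exists_good T ε hε H n (fun m _ => seq T ε hε H m))
termination_by n

lemma seq_spec (T : X →L[ℝ] Y) (ε : ℝ) (hε : 0 < ε)
    (H : ∀ X₀ : Submodule ℝ X, IsClosed (X₀ : Set X) → FiniteDimensional ℝ (X ⧸ X₀) →
      ∀ c > (0:ℝ), ∃ x ∈ X₀, ‖T x‖ < c * ‖x‖) (n : ℕ) :
    ‖(seq T ε hε H n).1‖ = 1 ∧ ‖T (seq T ε hε H n).1‖ < ε / 2 ^ (n + 4) ∧
      (∀ m, m < n → ∀ f ∈ (seq T ε hε H m).2, f (seq T ε hε H n).1 = 0) ∧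
      (∀ f ∈ (seq T ε hε H n).2, ‖f‖ ≤ 1) ∧
      (∀ u ∈ Submodule.span ℝ
          (insert (seq T ε hε H n).1 (Set.range fun m : Fin n => (seq T ε hε H m).1)),
        ∃ f ∈ (seq T ε hε H n).2, ‖u‖ ≤ 2 * f u) := by
  have h := Classical.choose_spec (exists_good T ε hε H n (fun m _ => seq T ε hε H m))
  rw [seq]
  exact ⟨h.1, h.2.1, fun m hm => h.2.2.1 m hm, h.2.2.2.1, h.2.2.2.2⟩

section Main
variable (T : X →L[ℝ] Y) (ε : ℝ) (hε : 0 < ε)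
    (H : ∀ X₀ : Submodule ℝ X, IsClosed (X₀ : Set X) → FiniteDimensional ℝ (X ⧸ X₀) →
      ∀ c > (0:ℝ), ∃ x ∈ X₀, ‖T x‖ < c * ‖x‖)

lemma seq_KI (n : ℕ) (u : X) (hu : u ∈ Submodule.span ℝ ((fun m => (seq T ε hε H m).1) '' {m | m ≤ n}))
    (v : X) (hv : v ∈ Submodule.span ℝ ((fun m => (seq T ε hε H m).1) '' {m | n < m})) :
    ‖u‖ ≤ 2 * ‖u + v‖ := by
  have hset : (fun m => (seq T ε hε H m).1) '' {m | m ≤ n}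
      = insert (seq T ε hε H n).1 (Set.range fun m : Fin n => (seq T ε hε H m).1) := by
    ext z
    simp only [Set.mem_image, Set.mem_insert_iff, Set.mem_range, Set.mem_setOf_eq]
    constructor
    · rintro ⟨m, hm, rfl⟩
      rcases eq_or_lt_of_le hm with rfl | hlt
      · exact Or.inl rfl
      · exact Or.inr ⟨⟨m, hlt⟩, rfl⟩
    · rintro (rfl | ⟨m, rfl⟩)
      · exact ⟨n, le_refl n, rfl⟩
      · exact ⟨m, le_of_lt m.2, rfl⟩
  rw [hset] at hu
  obtain ⟨f, hfF, hfu⟩ := (seq_spec T ε hε H n).2.2.2.2 u hu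
  have hf1 : ‖f‖ ≤ 1 := (seq_spec T ε hε H n).2.2.2.1 f hfF
  have hfv : f v = 0 := by
    have hsub : (fun m => (seq T ε hε H m).1) '' {m | n < m} ⊆ (LinearMap.ker (f : X →ₗ[ℝ] ℝ) : Set X) := by
      rintro z ⟨m, hm, rfl⟩
      exact (seq_spec T ε hε H m).2.2.1 n hm f hfF
    have := Submodule.span_le.2 hsub hv
    exact this
  have h1 : f (u + v) = f u := by rw [map_add, hfv, add_zero]
  have h2 : f (u + v) ≤ ‖u + v‖ := by
    calc f (u + v) ≤ |f (u + v)| := le_abs_self _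
    _ ≤ ‖f‖ * ‖u + v‖ := f.le_opNorm _
    _ ≤ 1 * ‖u + v‖ := by
        have := norm_nonneg (u + v); nlinarith
    _ = ‖u + v‖ := one_mul _
  calc ‖u‖ ≤ 2 * f u := hfu
  _ = 2 * f (u + v) := by rw [h1]
  _ ≤ 2 * ‖u + v‖ := by linarith

lemma seq_coeff_bound (s : Finset ℕ) (c : ℕ → ℝ)
    {u : X} (hu : u = ∑ j ∈ s, c j • (seq T ε hε H j).1) :
    ∀ j ∈ s, |c j| ≤ 4 * ‖u‖ := by
  classical
  have hPbound : ∀ m, ‖∑ j ∈ s.filter (· < m), c j • (seq T ε hε H j).1‖ ≤ 2 * ‖u‖ := by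
    intro m
    cases m with
    | zero =>
      have : s.filter (· < 0) = ∅ := by
        apply Finset.filter_false_of_mem; intro j _; exact Nat.not_lt_zero j
      rw [this, Finset.sum_empty, norm_zero]
      positivity
    | succ k =>
      set P : X := ∑ j ∈ s.filter (· < k+1), c j • (seq T ε hε H j).1 with hP
      have h1 : P ∈ Submodule.span ℝ ((fun m => (seq T ε hε H m).1) '' {m | m ≤ k}) := by
        apply Submodule.sum_mem
        intro j hj
        apply Submodule.smul_mem
        apply Submodule.subset_span
        exact ⟨j, Nat.lt_succ_iff.1 (Finset.mem_filter.1 hj).2, rfl⟩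
      have h2 : u - P ∈ Submodule.span ℝ ((fun m => (seq T ε hε H m).1) '' {m | k < m}) := by
        have heq : u - P = ∑ j ∈ s.filter (fun j => ¬ j < k+1), c j • (seq T ε hε H j).1 := by
          rw [sub_eq_iff_eq_add, hu, add_comm, Finset.sum_filter_add_sum_filter_not]
        rw [heq]
        apply Submodule.sum_mem
        intro j hj
        apply Submodule.smul_mem
        apply Submodule.subset_span
        refine ⟨j, ?_, rfl⟩
        have := (Finset.mem_filter.1 hj).2
        exact Nat.lt_of_succ_le (Nat.le_of_not_lt this)
      have := seq_KI T ε hε H k P h1 (u - P) h2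
      rwa [add_sub_cancel] at this
  intro j hj
  have hsplit : s.filter (· < j+1) = insert j (s.filter (· < j)) := by
    ext k
    simp only [Finset.mem_filter, Finset.mem_insert]
    constructor
    · rintro ⟨hk, hlt⟩
      rcases Nat.lt_succ_iff_lt_or_eq.1 hlt with h | rfl
      · exact Or.inr ⟨hk, h⟩
      · exact Or.inl rfl
    · rintro (rfl | ⟨hk, hlt⟩)
      · exact ⟨hj, Nat.lt_succ_self _⟩
      · exact ⟨hk, Nat.lt_succ_of_lt hlt⟩
  have hsum : (∑ i ∈ s.filter (· < j+1), c i • (seq T ε hε H i).1)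
      = c j • (seq T ε hε H j).1 + ∑ i ∈ s.filter (· < j), c i • (seq T ε hε H i).1 := by
    rw [hsplit, Finset.sum_insert (by simp)]
  have hnorm1 : ‖(seq T ε hε H j).1‖ = 1 := (seq_spec T ε hε H j).1
  have habs : |c j| = ‖c j • (seq T ε hε H j).1‖ := by
    rw [norm_smul, hnorm1, mul_one, Real.norm_eq_abs]
  rw [habs]
  have : c j • (seq T ε hε H j).1
      = (∑ i ∈ s.filter (· < j+1), c i • (seq T ε hε H i).1)
        - ∑ i ∈ s.filter (· < j), c i • (seq T ε hε H i).1 := by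
    rw [hsum]; abel
  rw [this]
  calc _ ≤ ‖∑ i ∈ s.filter (· < j+1), c i • (seq T ε hε H i).1‖
        + ‖∑ i ∈ s.filter (· < j), c i • (seq T ε hε H i).1‖ := norm_sub_le _ _
  _ ≤ 2 * ‖u‖ + 2 * ‖u‖ := add_le_add (hPbound _) (hPbound _)
  _ = 4 * ‖u‖ := by ring

lemma seq_T_span_bound :
    ∀ u ∈ Submodule.span ℝ (Set.range fun n => (seq T ε hε H n).1), ‖T u‖ ≤ ε * ‖u‖ := by
  classical
  intro u hu
  obtain ⟨c, hc⟩ := (Finsupp.mem_span_range_iff_exists_finsupp).1 hu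
  have hc' : u = ∑ j ∈ c.support, c j • (seq T ε hε H j).1 := by
    rw [← hc]; rfl
  have hcoeff := seq_coeff_bound T ε hε H c.support c hc'
  have hTu : T u = ∑ j ∈ c.support, c j • T (seq T ε hε H j).1 := by
    rw [hc']; rw [map_sum]; simp
  have hterm : ∀ j ∈ c.support, ‖c j • T (seq T ε hε H j).1‖ ≤ (4 * ‖u‖) * (ε / 2 ^ (j + 4)) := by
    intro j hj
    rw [norm_smul, Real.norm_eq_abs]
    have h1 := hcoeff j hj
    have h2 : ‖T (seq T ε hε H j).1‖ ≤ ε / 2 ^ (j + 4) := le_of_lt (seq_spec T ε hε H j).2.1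
    have h3 : (0:ℝ) ≤ |c j| := abs_nonneg _
    have h4 : (0:ℝ) ≤ ‖T (seq T ε hε H j).1‖ := norm_nonneg _
    nlinarith
  have hsum : ∑ j ∈ c.support, (ε / 2 ^ (j + 4)) ≤ ε / 8 := by
    have heq : ∀ j : ℕ, ε / 2 ^ (j + 4) = (ε / 16) * (1/2) ^ j := by
      intro j
      have h16 : (2:ℝ) ^ (j + 4) = 16 * 2 ^ j := by rw [pow_add]; ring
      rw [h16, div_pow, one_pow, div_mul_div_comm, mul_one]
    calc ∑ j ∈ c.support, (ε / 2 ^ (j + 4)) = (ε / 16) * ∑ j ∈ c.support, (1/2:ℝ) ^ j := by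
          rw [Finset.mul_sum]; exact Finset.sum_congr rfl fun j _ => heq j
    _ ≤ (ε / 16) * 2 := by
        apply mul_le_mul_of_nonneg_left _ (by positivity)
        obtain ⟨N, hN⟩ := Finset.exists_nat_subset_range c.support
        calc ∑ j ∈ c.support, (1/2:ℝ) ^ j ≤ ∑ j ∈ Finset.range N, (1/2:ℝ) ^ j :=
              Finset.sum_le_sum_of_subset_of_nonneg hN (fun j _ _ => by positivity)
        _ ≤ 2 := sum_geometric_two_le N
    _ = ε / 8 := by ring
  calc ‖T u‖ = ‖∑ j ∈ c.support, c j • T (seq T ε hε H j).1‖ := by rw [hTu]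
  _ ≤ ∑ j ∈ c.support, ‖c j • T (seq T ε hε H j).1‖ := norm_sum_le _ _
  _ ≤ ∑ j ∈ c.support, (4 * ‖u‖) * (ε / 2 ^ (j + 4)) := Finset.sum_le_sum hterm
  _ = (4 * ‖u‖) * ∑ j ∈ c.support, (ε / 2 ^ (j + 4)) := by rw [Finset.mul_sum]
  _ ≤ (4 * ‖u‖) * (ε / 8) := by
      apply mul_le_mul_of_nonneg_left hsum (by positivity)
  _ ≤ ε * ‖u‖ := by nlinarith [norm_nonneg u, hε.le]

lemma seq_linIndep : LinearIndependent ℝ (fun n => (seq T ε hε H n).1) := by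
  rw [linearIndependent_iff']
  intro s g hsum i hi
  have := seq_coeff_bound T ε hε H s g (u := 0) hsum.symm i hi
  simp at this
  exact this

end Main

lemma forward_dir (T : X →L[ℝ] Y) (ε : ℝ) (hε : 0 < ε)
    (H : ∀ X₀ : Submodule ℝ X, IsClosed (X₀ : Set X) → FiniteDimensional ℝ (X ⧸ X₀) →
      ∀ c > (0:ℝ), ∃ x ∈ X₀, ‖T x‖ < c * ‖x‖) :
    ∃ Z : Submodule ℝ X, IsClosed (Z : Set X) ∧ ¬ FiniteDimensional ℝ Z ∧
      ∀ u ∈ Z, ‖T u‖ ≤ ε * ‖u‖ := by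
  set S : Submodule ℝ X := Submodule.span ℝ (Set.range fun n => (seq T ε hε H n).1) with hS
  set Z := S.topologicalClosure with hZ
  refine ⟨Z, Submodule.isClosed_topologicalClosure S, ?_, ?_⟩
  · intro hFD
    have hxZ : ∀ n, (seq T ε hε H n).1 ∈ Z :=
      fun n => S.le_topologicalClosure (Submodule.subset_span (Set.mem_range_self n))
    set y : ℕ → Z := fun n => ⟨(seq T ε hε H n).1, hxZ n⟩ with hy
    have hli : LinearIndependent ℝ y := by
      apply LinearIndependent.of_comp Z.subtype
      exact seq_linIndep T ε hε H
    have := hli.lt_aleph0_of_finite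
    simp [Cardinal.mk_nat] at this
  · intro u hu
    have hCclosed : IsClosed {x : X | ‖T x‖ ≤ ε * ‖x‖} :=
      isClosed_le (T.continuous.norm) (continuous_const.mul continuous_norm)
    have hsub : (Z : Set X) ⊆ {x : X | ‖T x‖ ≤ ε * ‖x‖} := by
      rw [hZ, Submodule.topologicalClosure_coe]
      exact closure_minimal (fun v hv => seq_T_span_bound T ε hε H v hv) hCclosed
    exact hsub hu

end Aux

/-- a bounded operator `T : X → Y` between infinite-dimensional Banach
spaces is infinitely singular (there is no finite-codimensional closed subspace of `X` on
which `T` is bounded below, i.e. an isomorphism onto its image) if and only if for every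
`ε > 0` there is an infinite-dimensional closed subspace `X_ε ⊆ X` with
`‖T|_{X_ε}‖ ≤ ε`. -/

theorem statement17
    (X : Type) [NormedAddCommGroup X] [NormedSpace ℝ X] [CompleteSpace X]
    (Y : Type) [NormedAddCommGroup Y] [NormedSpace ℝ Y] [CompleteSpace Y]
    (hX : ¬ FiniteDimensional ℝ X) (hY : ¬ FiniteDimensional ℝ Y)
    (T : X →L[ℝ] Y) :
    (¬ ∃ X₀ : Submodule ℝ X, IsClosed (X₀ : Set X) ∧ FiniteDimensional ℝ (X ⧸ X₀) ∧
        ∃ c > (0 : ℝ), ∀ x ∈ X₀, c * ‖x‖ ≤ ‖T x‖) ↔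
    (∀ ε > (0 : ℝ), ∃ Xε : Submodule ℝ X, IsClosed (Xε : Set X) ∧
        ¬ FiniteDimensional ℝ Xε ∧ ∀ x ∈ Xε, ‖T x‖ ≤ ε * ‖x‖) := by
  constructor
  · intro h ε hε
    have H : ∀ X₀ : Submodule ℝ X, IsClosed (X₀ : Set X) → FiniteDimensional ℝ (X ⧸ X₀) →
        ∀ c > (0:ℝ), ∃ x ∈ X₀, ‖T x‖ < c * ‖x‖ := by
      intro X₀ hcl hfd c hc
      by_contra hcon
      push_neg at hcon
      exact h ⟨X₀, hcl, hfd, c, hc, hcon⟩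
    exact forward_dir T ε hε H
  · intro h
    rintro ⟨X₀, hcl, hfd, c, hc, hbound⟩
    obtain ⟨Z, hZcl, hZinf, hZb⟩ := h (c/2) (by linarith)
    set φ : Z →ₗ[ℝ] X ⧸ X₀ := X₀.mkQ.comp Z.subtype with hφ
    have hker : LinearMap.ker φ ≠ ⊥ := by
      intro hk
      exact hZinf (FiniteDimensional.of_injective φ (LinearMap.ker_eq_bot.1 hk))
    obtain ⟨z, hzker, hz0⟩ := Submodule.exists_mem_ne_zero_of_ne_bot hker
    have hzX₀ : (z : X) ∈ X₀ := by
      have := LinearMap.mem_ker.1 hzker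
      simpa [hφ, Submodule.Quotient.mk_eq_zero] using this
    have h1 : c * ‖(z : X)‖ ≤ ‖T (z : X)‖ := hbound _ hzX₀
    have h2 : ‖T (z : X)‖ ≤ (c/2) * ‖(z : X)‖ := hZb _ z.2
    have hz0' : (z : X) ≠ 0 := fun hh => hz0 (Subtype.ext hh)
    have : 0 < ‖(z : X)‖ := norm_pos_iff.2 hz0'
    nlinarith
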